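/- Let (Ω, F, P) be a probability space, b ∈ (1, 2], τ > 0, and let X, Y : Ω → ℝ be random variables with E[|X|^b] < ∞ and E[|Y|^b] < ∞. Then ψ_τ(X)·Y is integrable and E[|ψ_τ(X)·Y|] ≤ 2 τ^{2−b} (E[|X|^b])^{(b−1)/b} (E[|Y|^b])^{1/b}. -/

import Mathlib

open MeasureTheory Real

/-- The truncation function `ψ_τ(x) = max(−τ, min(x, τ))`. -/
noncomputable def truncFun (τ : ℝ) (x : ℝ) : ℝ := max (-τ) (min x τ)

lemma truncFun_abs_le_tau {τ x : ℝ} (hτ : 0 < τ) : |truncFun τ x| ≤ τ := by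
  rw [abs_le, truncFun]
  exact ⟨le_max_left _ _, max_le (by linarith) (min_le_right _ _)⟩

lemma truncFun_abs_le_abs {τ x : ℝ} (hτ : 0 < τ) : |truncFun τ x| ≤ |x| := by
  rcases le_total x 0 with h | h
  · have hmin : min x τ = x := min_eq_left (by linarith)
    rw [truncFun, hmin, abs_le, abs_of_nonpos h]
    exact ⟨by rw [neg_neg]; exact le_max_right _ _, max_le (by linarith) (by linarith)⟩
  · have h0 : 0 ≤ min x τ := le_min h hτ.le
    rw [truncFun, max_eq_right (by linarith), abs_le, abs_of_nonneg h]
    exact ⟨by linarith [min_le_right x τ], min_le_left _ _⟩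

theorem trunc_cross_moment_bound
    {Ω : Type*} [MeasurableSpace Ω] (μ : Measure Ω) [IsProbabilityMeasure μ]
    (b τ : ℝ) (hb : b ∈ Set.Ioc (1 : ℝ) 2) (hτ : 0 < τ)
    (X Y : Ω → ℝ) (hX : Measurable X) (hY : Measurable Y)
    (hXb : Integrable (fun ω => |X ω| ^ b) μ)
    (hYb : Integrable (fun ω => |Y ω| ^ b) μ) :
    Integrable (fun ω => truncFun τ (X ω) * Y ω) μ ∧
      ∫ ω, |truncFun τ (X ω) * Y ω| ∂μ
        ≤ 2 * τ ^ (2 - b) * (∫ ω, |X ω| ^ b ∂μ) ^ ((b - 1) / b)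
            * (∫ ω, |Y ω| ^ b ∂μ) ^ (1 / b) := by
  obtain ⟨hb1, hb2⟩ := hb
  have hb0 : (0 : ℝ) < b := by linarith
  have hbm1 : (0 : ℝ) < b - 1 := by linarith
  have h2b : (0 : ℝ) ≤ 2 - b := by linarith
  set p : ℝ := b / (b - 1) with hp_def
  have hpq : p.HolderConjugate b := by
    rw [Real.holderConjugate_iff]
    constructor
    · rw [hp_def, one_lt_div hbm1]; linarith
    · rw [hp_def]; field_simp; ring
  -- pointwise key bound
  have hkey : ∀ x y : ℝ, |truncFun τ x * y| ≤ τ ^ (2 - b) * (|x| ^ (b - 1) * |y|) := by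
    intro x y
    rw [abs_mul, ← mul_assoc]
    have h1 : |truncFun τ x| ≤ τ ^ (2 - b) * |x| ^ (b - 1) := by
      rcases eq_or_lt_of_le (abs_nonneg (truncFun τ x)) with h0 | h0
      · rw [← h0]; positivity
      · have heq : |truncFun τ x| = |truncFun τ x| ^ (2 - b) * |truncFun τ x| ^ (b - 1) := by
          rw [← Real.rpow_add h0]; norm_num
        rw [heq]
        exact mul_le_mul (Real.rpow_le_rpow (abs_nonneg _) (truncFun_abs_le_tau hτ) h2b)
          (Real.rpow_le_rpow (abs_nonneg _) (truncFun_abs_le_abs hτ) hbm1.le)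
          (Real.rpow_nonneg (abs_nonneg _) _) (Real.rpow_nonneg hτ.le _)
    exact mul_le_mul_of_nonneg_right h1 (abs_nonneg _)
  -- the auxiliary function h
  set h : Ω → ℝ := fun ω => |X ω| ^ (b - 1) * |Y ω| with hh_def
  have hmeas_h : Measurable h :=
    (((Real.continuous_rpow_const hbm1.le).measurable).comp hX.abs).mul hY.abs
  have h_nonneg : ∀ ω, 0 ≤ h ω := fun ω =>
    mul_nonneg (Real.rpow_nonneg (abs_nonneg _) _) (abs_nonneg _)
  have hbp : (b - 1) * p = b := by rw [hp_def]; field_simp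
  have hpow_eq : ∀ ω, (|X ω| ^ (b - 1)) ^ p = |X ω| ^ b := by
    intro ω
    rw [← Real.rpow_mul (abs_nonneg _), hbp]
  -- integrability of h via Young's inequality
  have h_int : Integrable h μ := by
    refine (hXb.add hYb).mono hmeas_h.aestronglyMeasurable (Filter.Eventually.of_forall ?_)
    intro ω
    rw [Real.norm_of_nonneg (h_nonneg ω)]
    have hy := Real.young_inequality_of_nonneg (Real.rpow_nonneg (abs_nonneg (X ω)) (b - 1))
      (abs_nonneg (Y ω)) hpq
    rw [hpow_eq ω] at hy
    have hyb : |Y ω| ^ b = (|Y ω| ^ b) := rfl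
    have h1 : |X ω| ^ b / p ≤ |X ω| ^ b :=
      div_le_self (Real.rpow_nonneg (abs_nonneg _) _) hpq.lt.le
    have h2 : |Y ω| ^ b / b ≤ |Y ω| ^ b :=
      div_le_self (Real.rpow_nonneg (abs_nonneg _) _) hb1.le
    have hnn : (0:ℝ) ≤ |X ω| ^ b + |Y ω| ^ b := by positivity
    simp only [Pi.add_apply]
    rw [Real.norm_of_nonneg hnn]
    calc h ω ≤ |X ω| ^ b / p + |Y ω| ^ b / b := hy
      _ ≤ |X ω| ^ b + |Y ω| ^ b := add_le_add h1 h2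
  -- integrability of the product
  have hmeas_prod : Measurable (fun ω => truncFun τ (X ω) * Y ω) := by
    exact ((measurable_const.max (hX.min measurable_const)).mul hY)
  have h_int_prod : Integrable (fun ω => truncFun τ (X ω) * Y ω) μ := by
    refine (h_int.const_mul (τ ^ (2 - b))).mono hmeas_prod.aestronglyMeasurable
      (Filter.Eventually.of_forall ?_)
    intro ω
    rw [Real.norm_eq_abs, Real.norm_of_nonneg
      (mul_nonneg (Real.rpow_nonneg hτ.le _) (h_nonneg ω))]
    exact hkey (X ω) (Y ω)
  refine ⟨h_int_prod, ?_⟩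
  -- MemLp facts
  have hbne0 : ENNReal.ofReal b ≠ 0 := by
    simp [ENNReal.ofReal_eq_zero]; linarith
  have hbnetop : ENNReal.ofReal b ≠ ⊤ := ENNReal.ofReal_ne_top
  have hMX : MemLp X (ENNReal.ofReal b) μ := by
    rw [← memLp_norm_rpow_iff hX.aestronglyMeasurable hbne0 hbnetop]
    rw [ENNReal.div_self hbne0 hbnetop, memLp_one_iff_integrable]
    simpa [ENNReal.toReal_ofReal hb0.le, Real.norm_eq_abs] using hXb
  have hMY : MemLp Y (ENNReal.ofReal b) μ := by
    rw [← memLp_norm_rpow_iff hY.aestronglyMeasurable hbne0 hbnetop]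
    rw [ENNReal.div_self hbne0 hbnetop, memLp_one_iff_integrable]
    simpa [ENNReal.toReal_ofReal hb0.le, Real.norm_eq_abs] using hYb
  have hMf : MemLp (fun ω => |X ω| ^ (b - 1)) (ENNReal.ofReal p) μ := by
    have := hMX.norm_rpow_div (ENNReal.ofReal (b - 1))
    rw [ENNReal.toReal_ofReal hbm1.le] at this
    rw [show ENNReal.ofReal p = ENNReal.ofReal b / ENNReal.ofReal (b - 1) by
      rw [hp_def, ENNReal.ofReal_div_of_pos hbm1]]
    simpa [Real.norm_eq_abs] using this
  have hMg : MemLp (fun ω => |Y ω|) (ENNReal.ofReal b) μ := by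
    simpa [Real.norm_eq_abs] using hMY.norm
  -- Hölder
  have holder := integral_mul_le_Lp_mul_Lq_of_nonneg hpq
    (Filter.Eventually.of_forall fun ω => Real.rpow_nonneg (abs_nonneg (X ω)) (b - 1))
    (Filter.Eventually.of_forall fun ω => abs_nonneg (Y ω)) hMf hMg
  rw [show (fun ω => (|X ω| ^ (b-1)) ^ p) = fun ω => |X ω| ^ b from funext hpow_eq] at holder
  -- clean the exponent rewriting in holder
  have hYpow : ∀ ω, |Y ω| ^ b = |Y ω| ^ b := fun _ => rfl
  have hinvp : 1 / p = (b - 1) / b := by rw [hp_def]; field_simp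
  rw [hinvp] at holder
  -- chain the inequalities
  have hstep1 : ∫ ω, |truncFun τ (X ω) * Y ω| ∂μ ≤ ∫ ω, τ ^ (2 - b) * h ω ∂μ := by
    refine integral_mono_of_nonneg (Filter.Eventually.of_forall fun ω => abs_nonneg _)
      (h_int.const_mul _) (Filter.Eventually.of_forall fun ω => hkey (X ω) (Y ω))
  rw [integral_const_mul] at hstep1
  have hA : (0:ℝ) ≤ ∫ ω, |X ω| ^ b ∂μ :=
    integral_nonneg fun ω => Real.rpow_nonneg (abs_nonneg _) _
  have hB : (0:ℝ) ≤ ∫ ω, |Y ω| ^ b ∂μ :=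
    integral_nonneg fun ω => Real.rpow_nonneg (abs_nonneg _) _
  have hstep2 : ∫ ω, h ω ∂μ ≤
      (∫ ω, |X ω| ^ b ∂μ) ^ ((b - 1) / b) * (∫ ω, |Y ω| ^ b ∂μ) ^ (1 / b) := holder
  have hτpow : (0:ℝ) ≤ τ ^ (2 - b) := Real.rpow_nonneg hτ.le _
  have hprod_nonneg : (0:ℝ) ≤ τ ^ (2 - b) * (∫ ω, |X ω| ^ b ∂μ) ^ ((b - 1) / b)
      * (∫ ω, |Y ω| ^ b ∂μ) ^ (1 / b) := by positivity
  calc ∫ ω, |truncFun τ (X ω) * Y ω| ∂μ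
      ≤ τ ^ (2 - b) * ∫ ω, h ω ∂μ := hstep1
    _ ≤ τ ^ (2 - b) * ((∫ ω, |X ω| ^ b ∂μ) ^ ((b - 1) / b) * (∫ ω, |Y ω| ^ b ∂μ) ^ (1 / b)) :=
        mul_le_mul_of_nonneg_left hstep2 hτpow
    _ = τ ^ (2 - b) * (∫ ω, |X ω| ^ b ∂μ) ^ ((b - 1) / b) * (∫ ω, |Y ω| ^ b ∂μ) ^ (1 / b) := by
        ring
    _ ≤ 2 * τ ^ (2 - b) * (∫ ω, |X ω| ^ b ∂μ) ^ ((b - 1) / b)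
          * (∫ ω, |Y ω| ^ b ∂μ) ^ (1 / b) := by linarith
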